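/- Let k be an algebraically closed field of characteristic 0 or of characteristic greater than 5. Let p and q be linearly independent binary quintic forms over k whose greatest common divisor has degree at most 3. Then for all but finitely many [λ:μ] ∈ P^1(k), the binary quintic form λp + μq has at least two distinct simple zeros in P^1(k), none of which is a common zero of p and q. (This is the key point of the positive-characteristic Bertini-type lemma: a general plane section through a line L contained in a nodal sextic surface with at most 3 nodes on L acquires at least 2 new simple double points on L.) -/
import Mathlib


open MvPolynomial

/-- `t ∈ ℙ¹(k)` is a simple zero (zero of multiplicity one) of the binary form `r`:
the linear form cutting out `t` divides `r`, but its square does not. -/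
def IsSimpleZero (k : Type*) [Field k] (r : MvPolynomial (Fin 2) k)
    (t : Projectivization k (Fin 2 → k)) : Prop :=
  (C (t.rep 1) * X 0 - C (t.rep 0) * X 1) ∣ r ∧
    ¬ (C (t.rep 1) * X 0 - C (t.rep 0) * X 1) ^ 2 ∣ r


namespace Stmt11Aux
open MvPolynomial Polynomial

variable {k : Type*} [Field k]

/-- Dehomogenization of a binary form. -/
noncomputable def D : MvPolynomial (Fin 2) k →ₐ[k] Polynomial k :=
  aeval ![Polynomial.X, 1]

/-- Homogenization (to degree `n`) of a polynomial of degree ≤ n. -/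
noncomputable def Hn (n : ℕ) : Polynomial k →+ MvPolynomial (Fin 2) k :=
  AddMonoidHom.mk' (fun u => ∑ i ∈ Finset.range (n+1),
      MvPolynomial.C (u.coeff i) * (X 0 ^ i * X 1 ^ (n - i)))
    (by
      intro u v
      rw [← Finset.sum_add_distrib]
      refine Finset.sum_congr rfl fun i _ => ?_
      rw [Polynomial.coeff_add, map_add, add_mul])

lemma Hn_apply (n : ℕ) (u : Polynomial k) :
    Hn n u = ∑ i ∈ Finset.range (n+1),
      MvPolynomial.C (u.coeff i) * (X 0 ^ i * X 1 ^ (n - i)) := rfl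

lemma Hn_isHomogeneous (n : ℕ) (u : Polynomial k) : (Hn n u).IsHomogeneous n := by
  rw [Hn_apply]
  refine IsHomogeneous.sum _ _ _ fun i hi => ?_
  have h : (MvPolynomial.C (u.coeff i) * (X (0:Fin 2) ^ i * X 1 ^ (n - i))).IsHomogeneous
      (0 + (i + (n - i))) :=
    (isHomogeneous_C _ _).mul ((isHomogeneous_X_pow _ _).mul (isHomogeneous_X_pow _ _))
  have : 0 + (i + (n - i)) = n := by
    have := Finset.mem_range.1 hi; omega
  rwa [this] at h

lemma D_Hn {n : ℕ} {u : Polynomial k} (h : u.natDegree < n + 1) : D (Hn n u) = u := by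
  rw [Hn_apply, map_sum]
  have : ∀ i ∈ Finset.range (n+1),
      D (MvPolynomial.C (u.coeff i) * (X (0:Fin 2) ^ i * X 1 ^ (n - i)))
        = Polynomial.C (u.coeff i) * Polynomial.X ^ i := by
    intro i _
    simp [D, algebraMap_eq, one_pow]
  rw [Finset.sum_congr rfl this]
  conv_rhs => rw [Polynomial.as_sum_range' u (n+1) h]
  refine Finset.sum_congr rfl fun i _ => ?_
  rw [Polynomial.C_mul_X_pow_eq_monomial]

lemma degree_fin2 (m : Fin 2 →₀ ℕ) : m.degree = m 0 + m 1 := by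
  have : m.degree = ∑ i : Fin 2, m i :=
    Finset.sum_subset (Finset.subset_univ _)
      (fun i _ hi => Finsupp.notMem_support_iff.1 hi)
  rw [this, Fin.sum_univ_two]

lemma isHom_deg {p : MvPolynomial (Fin 2) k} {n : ℕ} (hp : p.IsHomogeneous n)
    {m : Fin 2 →₀ ℕ} (hm : MvPolynomial.coeff m p ≠ 0) : m 0 + m 1 = n := by
  rw [← degree_fin2, Finsupp.degree_eq_weight_one]
  exact hp hm

lemma D_monomial (m : Fin 2 →₀ ℕ) (c : k) :
    D (monomial m c) = Polynomial.C c * Polynomial.X ^ (m 0) := by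
  rw [D, MvPolynomial.aeval_monomial]
  rw [Finsupp.prod_fintype _ _ (fun i => pow_zero _), Fin.prod_univ_two]
  simp [algebraMap_eq]

lemma monomial_eq_fin2 (m : Fin 2 →₀ ℕ) (c : k) :
    (monomial m c : MvPolynomial (Fin 2) k) = MvPolynomial.C c * (X 0 ^ (m 0) * X 1 ^ (m 1)) := by
  rw [monomial_eq, Finsupp.prod_fintype _ _ (fun i => pow_zero _), Fin.prod_univ_two]

lemma Hn_D {n : ℕ} {f : MvPolynomial (Fin 2) k} (hf : f.IsHomogeneous n) :
    Hn n (D f) = f := by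
  conv_rhs => rw [f.as_sum]
  rw [show D f = D (∑ m ∈ f.support, monomial m (MvPolynomial.coeff m f)) by rw [← f.as_sum],
    map_sum, map_sum]
  refine Finset.sum_congr rfl fun m hm => ?_
  have hdeg : m 0 + m 1 = n := isHom_deg hf (mem_support_iff.1 hm)
  rw [D_monomial, Hn_apply]
  rw [Finset.sum_eq_single (m 0)]
  · rw [Polynomial.coeff_C_mul, Polynomial.coeff_X_pow, if_pos rfl, mul_one,
      monomial_eq_fin2, show n - m 0 = m 1 from by omega]
  · intro i _ hne
    rw [Polynomial.coeff_C_mul, Polynomial.coeff_X_pow, if_neg hne, mul_zero,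
      map_zero, zero_mul]
  · intro hmem
    exact absurd (Finset.mem_range.2 (by omega)) hmem

lemma D_natDegree_le {n : ℕ} {f : MvPolynomial (Fin 2) k} (hf : f.IsHomogeneous n) :
    (D f).natDegree ≤ n := by
  rw [show D f = D (∑ m ∈ f.support, monomial m (MvPolynomial.coeff m f)) by rw [← f.as_sum],
    map_sum]
  refine Polynomial.natDegree_sum_le_of_forall_le _ _ fun m hm => ?_
  rw [D_monomial]
  refine le_trans (Polynomial.natDegree_C_mul_le _ _) ?_
  refine le_trans (Polynomial.natDegree_X_pow_le _) ?_
  have := isHom_deg hf (mem_support_iff.1 hm); omega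

lemma Hn_zero (n : ℕ) : (Hn n (0 : Polynomial k)) = 0 := map_zero _

lemma Hn_mul {a b : ℕ} {u v : Polynomial k} (hu : u.natDegree ≤ a) (hv : v.natDegree ≤ b) :
    Hn (a + b) (u * v) = Hn a u * Hn b v := by
  have hhom : (Hn a u * Hn b v).IsHomogeneous (a + b) :=
    (Hn_isHomogeneous a u).mul (Hn_isHomogeneous b v)
  have hD : D (Hn a u * Hn b v) = u * v := by
    rw [map_mul, D_Hn (by omega), D_Hn (by omega)]
  rw [← hD, Hn_D hhom]

lemma Hn_shift {m n : ℕ} {u : Polynomial k} (hu : u.natDegree ≤ m) (hmn : m ≤ n) :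
    Hn n u = X 1 ^ (n - m) * Hn m u := by
  have hhom : ((X 1 : MvPolynomial (Fin 2) k) ^ (n - m) * Hn m u).IsHomogeneous n := by
    have h : ((X 1 : MvPolynomial (Fin 2) k) ^ (n - m) * Hn m u).IsHomogeneous ((n - m) + m) :=
      (isHomogeneous_X_pow _ _).mul (Hn_isHomogeneous m u)
    rwa [Nat.sub_add_cancel hmn] at h
  have hD : D ((X 1 : MvPolynomial (Fin 2) k) ^ (n - m) * Hn m u) = u := by
    rw [map_mul, map_pow, D_Hn (by omega)]
    simp [D]
  conv_lhs => rw [← hD]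
  rw [Hn_D hhom]

lemma Hn_linear (r : k) :
    Hn 1 (Polynomial.X - Polynomial.C r) = X 0 - MvPolynomial.C r * X 1 := by
  rw [Hn_apply]
  rw [Finset.sum_range_succ, Finset.sum_range_one]
  simp [Polynomial.coeff_X_zero, Polynomial.coeff_X_one, sub_mul]
  ring

lemma Hn_pow_linear (r : k) (e : ℕ) :
    Hn e ((Polynomial.X - Polynomial.C r) ^ e) = (X 0 - MvPolynomial.C r * X 1) ^ e := by
  induction e with
  | zero =>
      rw [pow_zero, pow_zero, Hn_apply]
      simp
  | succ e ih =>
      have hd1 : (Polynomial.X - Polynomial.C r).natDegree ≤ 1 := by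
        simpa using Polynomial.natDegree_X_sub_C_le r
      have hde : ((Polynomial.X - Polynomial.C r) ^ e).natDegree ≤ e := by
        refine le_trans (Polynomial.natDegree_pow_le) ?_
        exact Nat.mul_le_mul_left e hd1 |>.trans (by omega)
      rw [pow_succ, pow_succ, show e + 1 = e + 1 from rfl, ← ih, ← Hn_linear r]
      rw [← Hn_mul hde hd1]

lemma D_linear (r : k) : D (X 0 - MvPolynomial.C r * X 1) = Polynomial.X - Polynomial.C r := by
  simp [D, algebraMap_eq]

lemma pow_linear_dvd_transfer {n e : ℕ} {f : MvPolynomial (Fin 2) k} (hf : f.IsHomogeneous n)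
    (he : e ≤ n) (r : k) :
    (X 0 - MvPolynomial.C r * X 1) ^ e ∣ f ↔ (Polynomial.X - Polynomial.C r) ^ e ∣ D f := by
  constructor
  · rintro ⟨g, rfl⟩
    exact ⟨D g, by rw [map_mul, map_pow, D_linear]⟩
  · rintro ⟨v, hv⟩
    rcases eq_or_ne v 0 with rfl | hv0
    · have : D f = 0 := by rw [hv, mul_zero]
      have hf0 : f = 0 := by
        rw [← Hn_D hf, this, Hn_zero]
      rw [hf0]
      exact dvd_zero _
    · have hXC : (Polynomial.X - Polynomial.C r) ≠ 0 := Polynomial.X_sub_C_ne_zero r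
      have hDdeg : (D f).natDegree ≤ n := D_natDegree_le hf
      have hvdeg : v.natDegree ≤ n - e := by
        have h1 : (D f).natDegree = e + v.natDegree := by
          rw [hv, Polynomial.natDegree_mul (pow_ne_zero _ hXC) hv0,
            Polynomial.natDegree_pow, Polynomial.natDegree_X_sub_C, mul_one]
        omega
      have : f = Hn n (D f) := (Hn_D hf).symm
      rw [this, hv, show n = e + (n - e) from by omega,
        Hn_mul (by rw [Polynomial.natDegree_pow, Polynomial.natDegree_X_sub_C, mul_one])
          hvdeg, Hn_pow_linear]
      exact Dvd.intro _ rfl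

lemma eval_transfer {n : ℕ} {f : MvPolynomial (Fin 2) k} (hf : f.IsHomogeneous n)
    (w : Fin 2 → k) (r u : k) (h0 : w 0 = u * r) (h1 : w 1 = u) :
    MvPolynomial.eval w f = u ^ n * (D f).eval r := by
  conv_lhs => rw [f.as_sum]
  rw [show D f = D (∑ m ∈ f.support, monomial m (MvPolynomial.coeff m f)) by rw [← f.as_sum],
    map_sum, map_sum, Polynomial.eval_finset_sum, Finset.mul_sum]
  refine Finset.sum_congr rfl fun m hm => ?_
  have hdeg : m 0 + m 1 = n := isHom_deg hf (mem_support_iff.1 hm)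
  rw [MvPolynomial.eval_monomial, Finsupp.prod_fintype _ _ (fun i => pow_zero _),
    Fin.prod_univ_two, D_monomial, h0, h1]
  rw [Polynomial.eval_mul, Polynomial.eval_C, Polynomial.eval_pow, Polynomial.eval_X]
  rw [mul_pow, ← hdeg, pow_add]
  ring

lemma sq_dvd_eval {u : Polynomial k} {r : k} (h : (Polynomial.X - Polynomial.C r) ^ 2 ∣ u) :
    u.eval r = 0 ∧ (Polynomial.derivative u).eval r = 0 := by
  obtain ⟨v, rfl⟩ := h
  constructor
  · simp
  · rw [Polynomial.derivative_mul, Polynomial.derivative_pow]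
    simp

lemma proj_ne_zero_iff (v : Fin 2 → k) : v ≠ 0 ↔ (v 0 ≠ 0 ∨ v 1 ≠ 0) := by
  constructor
  · intro hv
    by_contra h
    push_neg at h
    apply hv
    funext i
    fin_cases i
    · exact h.1
    · exact h.2
  · intro h hv
    rcases h with h | h
    · exact h (by rw [hv]; rfl)
    · exact h (by rw [hv]; rfl)

lemma mk_eq_of_cross (v w : Fin 2 → k) (hv : v ≠ 0) (hw : w ≠ 0)
    (h : v 0 * w 1 = v 1 * w 0) :
    Projectivization.mk k v hv = Projectivization.mk k w hw := by
  rw [Projectivization.mk_eq_mk_iff']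
  rcases (proj_ne_zero_iff w).1 hw with h0 | h0
  · refine ⟨v 0 / w 0, funext ?_⟩
    rw [Fin.forall_fin_two]
    refine ⟨?_, ?_⟩
    · show v 0 / w 0 * w 0 = v 0
      exact div_mul_cancel₀ _ h0
    · show v 0 / w 0 * w 1 = v 1
      rw [div_mul_eq_mul_div, h, mul_div_assoc, div_self h0, mul_one]
  · refine ⟨v 1 / w 1, funext ?_⟩
    rw [Fin.forall_fin_two]
    refine ⟨?_, ?_⟩
    · show v 1 / w 1 * w 0 = v 0
      rw [div_mul_eq_mul_div, ← h, mul_div_assoc, div_self h0, mul_one]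
    · show v 1 / w 1 * w 1 = v 1
      exact div_mul_cancel₀ _ h0

lemma cast_ne (hchar : ringChar k = 0 ∨ 5 < ringChar k) {d : ℕ} (h1 : 0 < d) (h2 : d ≤ 5) :
    (d : k) ≠ 0 := by
  intro h
  have hdvd : ringChar k ∣ d := (ringChar.spec k d).1 h
  rcases hchar with h0 | h5
  · rw [h0] at hdvd
    exact absurd (Nat.eq_zero_of_zero_dvd hdvd) (by omega)
  · have := Nat.le_of_dvd h1 hdvd
    omega

lemma deriv_eq_zero_natDegree (hchar : ringChar k = 0 ∨ 5 < ringChar k) {u : Polynomial k}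
    (hu : u ≠ 0) (hdeg : u.natDegree ≤ 5) (h : Polynomial.derivative u = 0) :
    u.natDegree = 0 := by
  by_contra hd
  have hdpos : 0 < u.natDegree := Nat.pos_of_ne_zero hd
  have hc : (Polynomial.derivative u).coeff (u.natDegree - 1) = 0 := by rw [h]; simp
  rw [Polynomial.coeff_derivative] at hc
  have he : u.natDegree - 1 + 1 = u.natDegree := by omega
  rw [he] at hc
  rcases mul_eq_zero.1 hc with h1 | h1
  · exact Polynomial.leadingCoeff_ne_zero.2 hu h1
  · have : ((u.natDegree - 1 + 1 : ℕ) : k) = 0 := by push_cast; exact h1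
    rw [he] at this
    exact cast_ne hchar hdpos hdeg this

lemma dvd_deriv_eq_zero {u : Polynomial k} (h : u ∣ Polynomial.derivative u) :
    Polynomial.derivative u = 0 := by
  by_contra h0
  have hle := Polynomial.natDegree_le_of_dvd h h0
  rcases eq_or_ne u.natDegree 0 with hz | hz
  · exact h0 (by rw [Polynomial.eq_C_of_natDegree_eq_zero hz]; simp)
  · exact absurd hle (not_le.2 (Polynomial.natDegree_derivative_lt hz))

lemma wronskian_ne_zero (hchar : ringChar k = 0 ∨ 5 < ringChar k) {P₁ Q₁ : Polynomial k}
    (hP : P₁ ≠ 0) (hQ : Q₁ ≠ 0) (hdP : P₁.natDegree ≤ 5) (hdQ : Q₁.natDegree ≤ 5)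
    (hcop : IsCoprime P₁ Q₁) (hN : ¬(P₁.natDegree = 0 ∧ Q₁.natDegree = 0)) :
    P₁ * Polynomial.derivative Q₁ - Polynomial.derivative P₁ * Q₁ ≠ 0 := by
  intro hW
  have heq : P₁ * Polynomial.derivative Q₁ = Polynomial.derivative P₁ * Q₁ :=
    sub_eq_zero.1 hW
  have hPdvd : P₁ ∣ Polynomial.derivative P₁ := by
    refine hcop.dvd_of_dvd_mul_right ⟨Polynomial.derivative Q₁, ?_⟩
    linear_combination -hW
  have hQdvd : Q₁ ∣ Polynomial.derivative Q₁ := by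
    refine hcop.symm.dvd_of_dvd_mul_right ⟨Polynomial.derivative P₁, ?_⟩
    linear_combination hW
  have h1 : P₁.natDegree = 0 := deriv_eq_zero_natDegree hchar hP hdP (dvd_deriv_eq_zero hPdvd)
  have h2 : Q₁.natDegree = 0 := deriv_eq_zero_natDegree hchar hQ hdQ (dvd_deriv_eq_zero hQdvd)
  exact hN ⟨h1, h2⟩

end Stmt11Aux

open Stmt11Aux

/-- Let `k` be an algebraically closed field of characteristic `0` or
`> 5`, and let `p`, `q` be linearly independent binary quintic forms over `k` whose gcd
has degree at most 3 (i.e. every common divisor has degree at most 3). Then for all but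
finitely many `[λ:μ] ∈ ℙ¹(k)`, the binary quintic `λp + μq` has at least two distinct
simple zeros in `ℙ¹(k)`, none of which is a common zero of `p` and `q`. -/
theorem stmt11 (k : Type*) [Field k] [IsAlgClosed k]
    (hchar : ringChar k = 0 ∨ 5 < ringChar k)
    (p q : MvPolynomial (Fin 2) k)
    (hp : p.IsHomogeneous 5) (hq : q.IsHomogeneous 5)
    (hli : LinearIndependent k ![p, q])
    (hgcd : ∀ h : MvPolynomial (Fin 2) k, h ∣ p → h ∣ q → h.totalDegree ≤ 3) :
    ∃ B : Set (Projectivization k (Fin 2 → k)), B.Finite ∧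
      ∀ c : Projectivization k (Fin 2 → k), c ∉ B →
        ∃ t₁ t₂ : Projectivization k (Fin 2 → k), t₁ ≠ t₂ ∧
          IsSimpleZero k (c.rep 0 • p + c.rep 1 • q) t₁ ∧
          IsSimpleZero k (c.rep 0 • p + c.rep 1 • q) t₂ ∧
          ¬ (eval t₁.rep p = 0 ∧ eval t₁.rep q = 0) ∧
          ¬ (eval t₂.rep p = 0 ∧ eval t₂.rep q = 0) := by
  classical
  -- extract linear independence facts
  have h2 := linearIndependent_fin2.1 hli
  simp only [Matrix.cons_val_one, Matrix.head_cons, Matrix.cons_val_zero] at h2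
  have hq0 : q ≠ 0 := h2.1
  have hp0 : p ≠ 0 := by
    intro hp'
    exact h2.2 0 (by rw [zero_smul, hp'])
  have hpq : ∀ a b : k, a • p + b • q = 0 → a = 0 ∧ b = 0 := by
    intro a b hab
    rcases eq_or_ne a 0 with rfl | ha
    · rw [zero_smul, zero_add] at hab
      rcases smul_eq_zero.1 hab with hb | hq'
      · exact ⟨rfl, hb⟩
      · exact absurd hq' hq0
    · exfalso
      have h3 : a • p = (-b) • q := by
        rw [neg_smul]
        exact eq_neg_of_add_eq_zero_left hab
      have h4 : (a⁻¹ * -b) • q = p := by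
        rw [mul_smul, ← h3, ← mul_smul, inv_mul_cancel₀ ha, one_smul]
      exact h2.2 _ h4
  -- dehomogenize
  set P : Polynomial k := D p with hPdef
  set Q : Polynomial k := D q with hQdef
  have hpH : p = Hn 5 P := (Hn_D hp).symm
  have hqH : q = Hn 5 Q := (Hn_D hq).symm
  have hP0 : P ≠ 0 := by
    intro h
    exact hp0 (by rw [hpH, h, Hn_zero])
  have hQ0 : Q ≠ 0 := by
    intro h
    exact hq0 (by rw [hqH, h, Hn_zero])
  have hPdeg : P.natDegree ≤ 5 := D_natDegree_le hp
  have hQdeg : Q.natDegree ≤ 5 := D_natDegree_le hq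
  -- gcd decomposition
  set G : Polynomial k := GCDMonoid.gcd P Q with hGdef
  have hG0 : G ≠ 0 := gcd_ne_zero_of_left hP0
  set P₁ : Polynomial k := P / G with hP₁def
  set Q₁ : Polynomial k := Q / G with hQ₁def
  have hPfac : P = G * P₁ :=
    (EuclideanDomain.mul_div_cancel' hG0 (GCDMonoid.gcd_dvd_left P Q)).symm
  have hQfac : Q = G * Q₁ :=
    (EuclideanDomain.mul_div_cancel' hG0 (GCDMonoid.gcd_dvd_right P Q)).symm
  have hcop : IsCoprime P₁ Q₁ := isCoprime_div_gcd_div_gcd hQ0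
  have hP₁0 : P₁ ≠ 0 := left_div_gcd_ne_zero hP0
  have hQ₁0 : Q₁ ≠ 0 := right_div_gcd_ne_zero hQ0
  have hdPdeg : P.natDegree = G.natDegree + P₁.natDegree := by
    rw [hPfac, Polynomial.natDegree_mul hG0 hP₁0]
  have hdQdeg : Q.natDegree = G.natDegree + Q₁.natDegree := by
    rw [hQfac, Polynomial.natDegree_mul hG0 hQ₁0]
  set N : ℕ := max P₁.natDegree Q₁.natDegree with hNdef
  have hp₁N : P₁.natDegree ≤ N := le_max_left _ _
  have hq₁N : Q₁.natDegree ≤ N := le_max_right _ _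
  have hNor : N = P₁.natDegree ∨ N = Q₁.natDegree := max_choice _ _
  -- N ≥ 2
  have hsplitP : Hn P.natDegree P = Hn G.natDegree G * Hn P₁.natDegree P₁ := by
    have h := Hn_mul (k := k) (u := G) (v := P₁) le_rfl le_rfl
    rw [← hPfac] at h
    rw [← hdPdeg] at h
    exact h
  have hsplitQ : Hn Q.natDegree Q = Hn G.natDegree G * Hn Q₁.natDegree Q₁ := by
    have h := Hn_mul (k := k) (u := G) (v := Q₁) le_rfl le_rfl
    rw [← hQfac] at h
    rw [← hdQdeg] at h
    exact h
  have hN2 : 2 ≤ N := by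
    by_contra hN
    push_neg at hN
    set e : ℕ := 5 - G.natDegree - N with he
    set hpoly : MvPolynomial (Fin 2) k := X 1 ^ e * Hn G.natDegree G with hhdef
    have hdvdp : hpoly ∣ p := by
      set mP : ℕ := 5 - P.natDegree - e with hmP
      refine ⟨X 1 ^ mP * Hn P₁.natDegree P₁, ?_⟩
      rw [hpH, Hn_shift le_rfl hPdeg, hsplitP,
        show 5 - P.natDegree = e + mP from by omega, pow_add]
      ring
    have hdvdq : hpoly ∣ q := by
      set mQ : ℕ := 5 - Q.natDegree - e with hmQ
      refine ⟨X 1 ^ mQ * Hn Q₁.natDegree Q₁, ?_⟩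
      rw [hqH, Hn_shift le_rfl hQdeg, hsplitQ,
        show 5 - Q.natDegree = e + mQ from by omega, pow_add]
      ring
    have hhom : hpoly.IsHomogeneous (e + G.natDegree) :=
      (isHomogeneous_X_pow _ _).mul (Hn_isHomogeneous _ _)
    have hh0 : hpoly ≠ 0 := by
      refine mul_ne_zero (pow_ne_zero _ (X_ne_zero _)) ?_
      intro hh
      apply hG0
      rw [← D_Hn (show G.natDegree < G.natDegree + 1 from lt_add_one _), hh, map_zero]
    have h3 := hgcd hpoly hdvdp hdvdq
    rw [hhom.totalDegree hh0] at h3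
    omega
  -- degrees of P₁, Q₁ at most 5
  have hdP₁5 : P₁.natDegree ≤ 5 := by omega
  have hdQ₁5 : Q₁.natDegree ≤ 5 := by omega
  -- wronskian
  set W : Polynomial k :=
    P₁ * Polynomial.derivative Q₁ - Polynomial.derivative P₁ * Q₁ with hWdef
  have hW0 : W ≠ 0 :=
    wronskian_ne_zero hchar hP₁0 hQ₁0 hdP₁5 hdQ₁5 hcop (by omega)
  -- coprimality: no common values
  have hnz : ∀ r : k, ¬(P₁.eval r = 0 ∧ Q₁.eval r = 0) := by
    rintro r ⟨hr1, hr2⟩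
    obtain ⟨a, b, hab⟩ := hcop
    have := congrArg (Polynomial.eval r) hab
    simp only [Polynomial.eval_add, Polynomial.eval_mul, hr1, hr2, mul_zero,
      add_zero, Polynomial.eval_one, zero_add] at this
    exact one_ne_zero this.symm
  have hvec : ∀ r : k, (![-(Q₁.eval r), P₁.eval r] : Fin 2 → k) ≠ 0 := by
    intro r hr
    apply hnz r
    constructor
    · have := congrFun hr 1; simpa using this
    · have := congrFun hr 0; simpa using this
  -- leading coefficients
  have hlead : ¬(P₁.coeff N = 0 ∧ Q₁.coeff N = 0) := by
    rintro ⟨h1, h1'⟩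
    rcases hNor with h | h
    · exact Polynomial.leadingCoeff_ne_zero.2 hP₁0 (by rw [Polynomial.leadingCoeff, ← h, h1])
    · exact Polynomial.leadingCoeff_ne_zero.2 hQ₁0 (by rw [Polynomial.leadingCoeff, ← h, h1'])
  have hvecN : (![-(Q₁.coeff N), P₁.coeff N] : Fin 2 → k) ≠ 0 := by
    intro hr
    apply hlead
    constructor
    · have := congrFun hr 1; simpa using this
    · have := congrFun hr 0; simpa using this
  -- the bad set
  refine ⟨(fun r : k => Projectivization.mk k _ (hvec r)) ''
      ((W.roots.toFinset : Set k) ∪ (G.roots.toFinset : Set k)) ∪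
      {Projectivization.mk k _ hvecN}, ?_, ?_⟩
  · exact Set.Finite.union
      (Set.Finite.image _ (Set.Finite.union W.roots.toFinset.finite_toSet
        G.roots.toFinset.finite_toSet))
      (Set.finite_singleton _)
  intro c hcB
  -- identification of bad parameters
  have hident : ∀ (A Bv : k) (hw : (![-Bv, A] : Fin 2 → k) ≠ 0),
      c.rep 0 * A + c.rep 1 * Bv = 0 → c = Projectivization.mk k ![-Bv, A] hw := by
    intro A Bv hw hrel
    refine (Projectivization.mk_rep c).symm.trans
      (mk_eq_of_cross _ _ (Projectivization.rep_nonzero c) hw ?_)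
    show c.rep 0 * (![-Bv, A] 1) = c.rep 1 * (![-Bv, A] 0)
    simp only [Matrix.cons_val_one, Matrix.head_cons, Matrix.cons_val_zero]
    linear_combination hrel
  set K : Polynomial k :=
    Polynomial.C (c.rep 0) * P₁ + Polynomial.C (c.rep 1) * Q₁ with hKdef
  -- claim 1 : the leading coefficient of K does not vanish
  have claim1 : K.coeff N ≠ 0 := by
    intro h
    rw [Polynomial.coeff_add, Polynomial.coeff_C_mul, Polynomial.coeff_C_mul] at h
    exact hcB (Set.mem_union_right _ (Set.mem_singleton_iff.2 (hident _ _ hvecN h)))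
  have hK0 : K ≠ 0 := fun h => claim1 (by rw [h, Polynomial.coeff_zero])
  have hKdeg : K.natDegree = N := by
    refine le_antisymm ?_ (Polynomial.le_natDegree_of_ne_zero claim1)
    refine le_trans (Polynomial.natDegree_add_le _ _) (max_le ?_ ?_)
    · exact le_trans (Polynomial.natDegree_C_mul_le _ _) hp₁N
    · exact le_trans (Polynomial.natDegree_C_mul_le _ _) hq₁N
  -- claim 2 : K does not vanish at roots of G
  have claim2 : ∀ r : k, G.eval r = 0 → K.eval r ≠ 0 := by
    intro r hGr hKr
    have hKr' : c.rep 0 * P₁.eval r + c.rep 1 * Q₁.eval r = 0 := by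
      simpa [hKdef, Polynomial.eval_add, Polynomial.eval_mul, Polynomial.eval_C] using hKr
    refine hcB (Set.mem_union_left _ ⟨r, Set.mem_union_right _ ?_, (hident _ _ (hvec r) hKr').symm⟩)
    exact Multiset.mem_toFinset.2 (Polynomial.mem_roots'.2 ⟨hG0, hGr⟩)
  -- claim 3 : roots of K are simple
  have claim3 : ∀ r : k, K.eval r = 0 → (Polynomial.derivative K).eval r ≠ 0 := by
    intro r hKr hK'r
    have hd : Polynomial.derivative K =
        Polynomial.C (c.rep 0) * Polynomial.derivative P₁ +
          Polynomial.C (c.rep 1) * Polynomial.derivative Q₁ := by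
      rw [hKdef]
      simp [Polynomial.derivative_add, Polynomial.derivative_C_mul]
    have e1 : c.rep 0 * P₁.eval r + c.rep 1 * Q₁.eval r = 0 := by
      simpa [hKdef, Polynomial.eval_add, Polynomial.eval_mul, Polynomial.eval_C] using hKr
    have e2 : c.rep 0 * (Polynomial.derivative P₁).eval r
        + c.rep 1 * (Polynomial.derivative Q₁).eval r = 0 := by
      rw [hd] at hK'r
      simpa [Polynomial.eval_add, Polynomial.eval_mul, Polynomial.eval_C] using hK'r
    have hWr : W.eval r = 0 := by
      have hcross : ∀ x : k, (x = c.rep 0 ∨ x = c.rep 1) → x * W.eval r = 0 := by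
        intro x hx
        have hWev : W.eval r = P₁.eval r * (Polynomial.derivative Q₁).eval r
            - (Polynomial.derivative P₁).eval r * Q₁.eval r := by
          simp [hWdef, Polynomial.eval_sub, Polynomial.eval_mul]
        rcases hx with rfl | rfl
        · rw [hWev]; linear_combination (Polynomial.derivative Q₁).eval r * e1
            - Q₁.eval r * e2
        · rw [hWev]; linear_combination -((Polynomial.derivative P₁).eval r) * e1
            + P₁.eval r * e2
      have hcnz : c.rep 0 ≠ 0 ∨ c.rep 1 ≠ 0 := (proj_ne_zero_iff _).1 (Projectivization.rep_nonzero c)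
      rcases hcnz with h | h
      · exact (mul_eq_zero.1 (hcross _ (Or.inl rfl))).resolve_left h
      · exact (mul_eq_zero.1 (hcross _ (Or.inr rfl))).resolve_left h
    refine hcB (Set.mem_union_left _ ⟨r, Set.mem_union_left _ ?_, (hident _ _ (hvec r) e1).symm⟩)
    exact Multiset.mem_toFinset.2 (Polynomial.mem_roots'.2 ⟨hW0, hWr⟩)
  -- K has N roots
  have hcard : K.roots.card = N := by
    rw [← hKdeg]
    exact Polynomial.splits_iff_card_roots.1 (IsAlgClosed.splits K)
  have hroots_ne : K.roots ≠ 0 := by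
    intro h
    rw [h, Multiset.card_zero] at hcard
    omega
  obtain ⟨r₁, hr₁⟩ := Multiset.exists_mem_of_ne_zero hroots_ne
  have hr₁root : K.eval r₁ = 0 := Polynomial.isRoot_of_mem_roots hr₁
  have hcount : K.roots.count r₁ ≤ 1 := by
    by_contra hcnt
    push_neg at hcnt
    have h2le : 2 ≤ Polynomial.rootMultiplicity r₁ K := by
      rw [← Polynomial.count_roots]; omega
    have hdvd2 : (Polynomial.X - Polynomial.C r₁) ^ 2 ∣ K :=
      (Polynomial.le_rootMultiplicity_iff hK0).1 h2le
    exact claim3 r₁ hr₁root (sq_dvd_eval hdvd2).2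
  obtain ⟨r₂, hr₂, hr₂ne⟩ : ∃ r₂ ∈ K.roots, r₂ ≠ r₁ := by
    by_contra h
    push_neg at h
    have : K.roots.count r₁ = K.roots.card :=
      Multiset.count_eq_card.2 fun x hx => (h x hx).symm
    omega
  have hr₂root : K.eval r₂ = 0 := Polynomial.isRoot_of_mem_roots hr₂
  -- the pencil member
  have hf5 : (c.rep 0 • p + c.rep 1 • q).IsHomogeneous 5 := by
    rw [MvPolynomial.smul_eq_C_mul, MvPolynomial.smul_eq_C_mul]
    exact (hp.C_mul _).add (hq.C_mul _)
  have hDf : D (c.rep 0 • p + c.rep 1 • q) = G * K := by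
    rw [map_add]
    rw [show D (c.rep 0 • p) = c.rep 0 • D p from map_smul D _ _,
      show D (c.rep 1 • q) = c.rep 1 • D q from map_smul D _ _]
    rw [Polynomial.smul_eq_C_mul, Polynomial.smul_eq_C_mul, ← hPdef, ← hQdef,
      hPfac, hQfac, hKdef]
    ring
  -- points are nonzero vectors
  have htnz : ∀ r : k, (![r, 1] : Fin 2 → k) ≠ 0 := by
    intro r hr
    have := congrFun hr 1
    simpa using this
  -- main step: each root of K gives a simple non-common zero
  have main : ∀ r : k, K.eval r = 0 →
      IsSimpleZero k (c.rep 0 • p + c.rep 1 • q) (Projectivization.mk k ![r, 1] (htnz r)) ∧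
      ¬ (eval (Projectivization.mk k ![r, 1] (htnz r)).rep p = 0 ∧
         eval (Projectivization.mk k ![r, 1] (htnz r)).rep q = 0) := by
    intro r hKr
    obtain ⟨u, hu⟩ := Projectivization.exists_smul_eq_mk_rep k ![r, 1] (htnz r)
    set t := Projectivization.mk k ![r, 1] (htnz r) with htdef
    have h1 : t.rep 1 = (u : k) := by
      have := congrFun hu 1
      simpa [Units.smul_def] using this.symm
    have h0 : t.rep 0 = (u : k) * r := by
      have := congrFun hu 0
      simpa [Units.smul_def] using this.symm
    have hGr : G.eval r ≠ 0 := fun h => claim2 r h hKr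
    have hL : (C (t.rep 1) * X 0 - C (t.rep 0) * X 1 : MvPolynomial (Fin 2) k) =
        C ((u : k)) * (X 0 - C r * X 1) := by
      rw [h0, h1, map_mul]
      ring
    have hUnit : IsUnit (C ((u : k)) : MvPolynomial (Fin 2) k) :=
      IsUnit.map (C : k →+* MvPolynomial (Fin 2) k) u.isUnit
    refine ⟨⟨?_, ?_⟩, ?_⟩
    · -- divisibility
      rw [hL, hUnit.mul_left_dvd]
      have htr := pow_linear_dvd_transfer hf5 (show (1:ℕ) ≤ 5 by omega) r
      rw [pow_one, pow_one] at htr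
      rw [htr, hDf]
      exact Dvd.dvd.mul_left (Polynomial.dvd_iff_isRoot.2 hKr) G
    · -- not a double zero
      intro hsq
      rw [hL, mul_pow, ← map_pow] at hsq
      have hUnit2 : IsUnit (C ((u : k) ^ 2) : MvPolynomial (Fin 2) k) :=
        IsUnit.map (C : k →+* MvPolynomial (Fin 2) k) (u ^ 2).isUnit
      rw [hUnit2.mul_left_dvd] at hsq
      rw [pow_linear_dvd_transfer hf5 (show (2:ℕ) ≤ 5 by omega) r, hDf] at hsq
      obtain ⟨hev, hdev⟩ := sq_dvd_eval hsq
      rw [Polynomial.derivative_mul, Polynomial.eval_add, Polynomial.eval_mul,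
        Polynomial.eval_mul, hKr, mul_zero, zero_add] at hdev
      rcases mul_eq_zero.1 hdev with h | h
      · exact hGr h
      · exact claim3 r hKr h
    · -- not a common zero of p and q
      rintro ⟨hpz, hqz⟩
      rw [eval_transfer hp t.rep r (u : k) h0 h1] at hpz
      rw [eval_transfer hq t.rep r (u : k) h0 h1] at hqz
      have hu5 : ((u : k)) ^ 5 ≠ 0 := pow_ne_zero _ u.ne_zero
      have hPr : Polynomial.eval r P = 0 := by
        rcases mul_eq_zero.1 hpz with h | h
        · exact absurd h hu5
        · exact h
      have hQr : Polynomial.eval r Q = 0 := by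
        rcases mul_eq_zero.1 hqz with h | h
        · exact absurd h hu5
        · exact h
      rw [hPfac, Polynomial.eval_mul] at hPr
      rw [hQfac, Polynomial.eval_mul] at hQr
      exact hnz r ⟨(mul_eq_zero.1 hPr).resolve_left hGr,
        (mul_eq_zero.1 hQr).resolve_left hGr⟩
  -- conclude
  refine ⟨Projectivization.mk k ![r₁, 1] (htnz r₁), Projectivization.mk k ![r₂, 1] (htnz r₂),
    ?_, (main r₁ hr₁root).1, (main r₂ hr₂root).1, (main r₁ hr₁root).2, (main r₂ hr₂root).2⟩
  intro h
  rw [Projectivization.mk_eq_mk_iff'] at h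
  obtain ⟨a, ha⟩ := h
  have ha1 : a = 1 := by
    have := congrFun ha 1
    simpa using this
  have ha0 : a * r₂ = r₁ := by
    have := congrFun ha 0
    simpa using this
  rw [ha1, one_mul] at ha0
  exact hr₂ne ha0
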